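/- Let f : ℝ^d → ℂ be measurable and define its non-increasing majorant η(x) := sup_{‖t‖_r ≥ ‖x‖_r} |f(t)| for some fixed 1 ≤ r ≤ ∞. Then f belongs to the homogeneous Herz space E_∞(ℝ^d) if and only if η ∈ L¹(ℝ^d), and moreover C^{-1}‖η‖₁ ≤ ‖f‖_{E_∞} ≤ C‖η‖₁ for a constant C depending only on d and r. -/

import Mathlib

open MeasureTheory ENNReal Real

/-- The annulus `P_k = {x ∈ ℝ^d : 2^{k-1} π ≤ ‖x‖ < 2^k π}` (sup norm on `ℝ^d`). -/
def herzAnnulus (d : ℕ) (k : ℤ) : Set (Fin d → ℝ) :=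
  {x | (2 : ℝ) ^ (k - 1) * π ≤ ‖x‖ ∧ ‖x‖ < (2 : ℝ) ^ k * π}

/-- The homogeneous Herz norm `‖f‖_{E_∞} = ∑_{k∈ℤ} 2^{kd} sup_{P_k} |f|`. -/
noncomputable def herzNorm (d : ℕ) (f : (Fin d → ℝ) → ℂ) : ℝ≥0∞ :=
  ∑' k : ℤ, (2 : ℝ≥0∞) ^ (k * (d : ℤ)) * ⨆ x ∈ herzAnnulus d k, (‖f x‖₊ : ℝ≥0∞)

/-- The non-increasing majorant `η(x) = sup_{‖t‖ ≥ ‖x‖} |f(t)|`. -/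
noncomputable def nonincMajorant (d : ℕ) (f : (Fin d → ℝ) → ℂ) (x : Fin d → ℝ) : ℝ≥0∞ :=
  ⨆ (t : Fin d → ℝ) (_ : ‖x‖ ≤ ‖t‖), (‖f t‖₊ : ℝ≥0∞)

namespace HerzAux

open Set
open scoped NNReal

lemma ofReal_two_zpow (m : ℤ) : ENNReal.ofReal ((2:ℝ)^m) = (2:ℝ≥0∞)^m := by
  have h1 : ((2:ℝ)^m) = NNReal.toReal ((2:ℝ≥0)^m) := by
    rw [NNReal.coe_zpow]; norm_num
  rw [h1, ENNReal.ofReal_coe_nnreal, ENNReal.coe_zpow (by norm_num)]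
  norm_num

lemma ofReal_two_zpow_pi (m : ℤ) :
    ENNReal.ofReal ((2:ℝ)^m * π) = (2:ℝ≥0∞)^m * ENNReal.ofReal π := by
  rw [ENNReal.ofReal_mul (by positivity), ofReal_two_zpow]

lemma two_zpow_add (a b : ℤ) : (2:ℝ≥0∞)^(a+b) = 2^a * 2^b :=
  ENNReal.zpow_add (by norm_num) (by norm_num) a b

lemma two_zpow_pow (m : ℤ) (n : ℕ) : ((2:ℝ≥0∞)^m)^n = 2^(m*n) := by
  induction n with
  | zero => simp
  | succ n ih =>
    rw [pow_succ, ih, ← two_zpow_add]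
    congr 1; push_cast; ring

variable {d : ℕ}

lemma norm_pos_of_mem {k : ℤ} {x : Fin d → ℝ} (hx : x ∈ herzAnnulus d k) : 0 < ‖x‖ :=
  lt_of_lt_of_le (by positivity) hx.1

lemma measurableSet_annulus (d : ℕ) (k : ℤ) : MeasurableSet (herzAnnulus d k) := by
  have h : herzAnnulus d k
      = (fun x : Fin d → ℝ => ‖x‖) ⁻¹' (Ico ((2:ℝ)^(k-1)*π) ((2:ℝ)^k*π)) := rfl
  rw [h]
  exact measurableSet_Ico.preimage measurable_norm

lemma disjoint_annulus (d : ℕ) : Pairwise (Function.onFun Disjoint (herzAnnulus d)) := by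
  intro k j hkj
  wlog h : k < j generalizing k j
  · exact (this hkj.symm (by omega)).symm
  refine Set.disjoint_left.mpr ?_
  rintro x ⟨_, hx2⟩ ⟨hx3, _⟩
  have h1 : (2:ℝ)^k ≤ (2:ℝ)^(j-1) := by
    apply zpow_le_zpow_right₀ one_le_two; omega
  have h2 : (2:ℝ)^(j-1)*π < 2^k*π := lt_of_le_of_lt hx3 hx2
  have h3 : (2:ℝ)^(j-1) < 2^k := (mul_lt_mul_iff_of_pos_right Real.pi_pos).mp h2
  linarith

lemma exists_annulus {t : Fin d → ℝ} (ht : 0 < ‖t‖) : ∃ k, t ∈ herzAnnulus d k := by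
  obtain ⟨n, h1, h2⟩ := exists_mem_Ico_zpow (x := ‖t‖/π) (y := 2) (by positivity) one_lt_two
  refine ⟨n+1, ?_, ?_⟩
  · rw [show (n+1-1 : ℤ) = n by ring]
    exact (le_div_iff₀ Real.pi_pos).mp h1
  · exact (div_lt_iff₀ Real.pi_pos).mp h2

lemma le_of_annulus {k j : ℤ} {x t : Fin d → ℝ} (hx : x ∈ herzAnnulus d k)
    (ht : t ∈ herzAnnulus d j) (h : ‖x‖ ≤ ‖t‖) : k ≤ j := by
  have h1 : (2:ℝ)^(k-1)*π < 2^j*π := lt_of_le_of_lt (hx.1.trans h) ht.2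
  have h2 : (2:ℝ)^(k-1) < 2^j := (mul_lt_mul_iff_of_pos_right Real.pi_pos).mp h1
  have h3 : k - 1 < j := (zpow_lt_zpow_iff_right₀ (by norm_num : (1:ℝ) < 2)).mp h2
  omega

lemma volume_annulus_le (d : ℕ) (k : ℤ) :
    volume (herzAnnulus d k) ≤ 2^((k+1)*(d:ℤ)) * (ENNReal.ofReal π)^d := by
  have hsub : herzAnnulus d k ⊆ Metric.ball (0 : Fin d → ℝ) ((2:ℝ)^k*π) := by
    intro x hx
    rw [mem_ball_zero_iff]
    exact hx.2
  refine (measure_mono hsub).trans ?_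
  rw [Real.volume_pi_ball _ (by positivity)]
  have h : (2:ℝ) * ((2:ℝ)^k*π) = (2:ℝ)^(k+1)*π := by
    rw [zpow_add₀ (two_ne_zero) k 1]; ring
  rw [h, ENNReal.ofReal_pow (by positivity), ofReal_two_zpow_pi, mul_pow, two_zpow_pow,
    Fintype.card_fin]

lemma le_volume_annulus (hd : 0 < d) (k : ℤ) :
    2^((k-1)*(d:ℤ)) * (ENNReal.ofReal π)^d ≤ volume (herzAnnulus d k) := by
  have hab : (0:ℝ) < (2:ℝ)^(k-1)*π := by positivity
  have hb : (0:ℝ) < (2:ℝ)^k*π := by positivity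
  have hsub : (Set.univ.pi fun _ : Fin d => Set.Ico ((2:ℝ)^(k-1)*π) ((2:ℝ)^k*π))
      ⊆ herzAnnulus d k := by
    intro x hx
    simp only [Set.mem_pi, Set.mem_univ, forall_true_left, Set.mem_Ico] at hx
    have hlt : ∀ i, x i < (2:ℝ)^k*π := fun i => (hx i).2
    have hge : ∀ i, (2:ℝ)^(k-1)*π ≤ x i := fun i => (hx i).1
    constructor
    · exact ((hge ⟨0, hd⟩).trans ((le_abs_self _).trans (norm_le_pi_norm x ⟨0, hd⟩)))
    · rw [pi_norm_lt_iff hb]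
      intro i
      rw [Real.norm_eq_abs, abs_of_nonneg (le_trans hab.le (hge i))]
      exact hlt i
  refine le_trans ?_ (measure_mono hsub)
  rw [volume_pi_Ico]
  have h : (2:ℝ)^k*π - (2:ℝ)^(k-1)*π = (2:ℝ)^(k-1)*π := by
    rw [show (k:ℤ) = (k-1)+1 by ring, zpow_add₀ two_ne_zero]; ring
  rw [h, Finset.prod_const, ofReal_two_zpow_pi, mul_pow, two_zpow_pow]
  simp

end HerzAux
open MeasureTheory ENNReal Real HerzAux

theorem herz_iff_majorant_integrable (d : ℕ) (hd : 0 < d) :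
    ∃ C : ℝ≥0∞, 0 < C ∧ C < ∞ ∧ ∀ f : (Fin d → ℝ) → ℂ, Measurable f →
      ((herzNorm d f < ∞ ↔ (∫⁻ x, nonincMajorant d f x) < ∞) ∧
        C⁻¹ * ∫⁻ x, nonincMajorant d f x ≤ herzNorm d f ∧
        herzNorm d f ≤ C * ∫⁻ x, nonincMajorant d f x) := by
  set PP : ℝ≥0∞ := ENNReal.ofReal π with hPP
  have hPi0 : PP ≠ 0 := by
    simpa [hPP] using (ENNReal.ofReal_pos.mpr Real.pi_pos).ne'
  have hPit : PP ≠ ∞ := ENNReal.ofReal_ne_top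
  have hPd0 : PP^d ≠ 0 := pow_ne_zero d hPi0
  have hPdt : PP^d ≠ ∞ := ENNReal.pow_ne_top hPit
  set C : ℝ≥0∞ := 2^(2*d+1) * (PP^d + (PP^d)⁻¹) with hCdef
  have hC0 : C ≠ 0 := by
    rw [hCdef]
    refine mul_ne_zero (by positivity) ?_
    simp only [ne_eq, add_eq_zero, not_and]
    intro h; exact absurd h hPd0
  have hCt : C ≠ ∞ := by
    rw [hCdef]
    refine (ENNReal.mul_lt_top (ENNReal.pow_lt_top (by norm_num))
      (ENNReal.add_lt_top.mpr ⟨hPdt.lt_top,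
        (ENNReal.inv_lt_top).mpr (pos_iff_ne_zero.mpr hPd0)⟩)).ne
  refine ⟨C, pos_iff_ne_zero.mpr hC0, lt_top_iff_ne_top.mpr hCt, ?_⟩
  intro f _hf
  set S : ℤ → ℝ≥0∞ := fun k => ⨆ x ∈ herzAnnulus d k, (‖f x‖₊ : ℝ≥0∞) with hS
  set η : (Fin d → ℝ) → ℝ≥0∞ := nonincMajorant d f with hη
  have hHerz : herzNorm d f = ∑' k : ℤ, (2:ℝ≥0∞)^(k*(d:ℤ)) * S k := rfl
  -- splitting of the integral
  have hSplit : (∫⁻ x, η x) = ∑' k : ℤ, ∫⁻ x in herzAnnulus d k, η x := by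
    have hU : MeasurableSet (⋃ k : ℤ, herzAnnulus d k) :=
      MeasurableSet.iUnion fun k => measurableSet_annulus d k
    rw [← lintegral_add_compl η hU,
      lintegral_iUnion (fun k => measurableSet_annulus d k) (disjoint_annulus d) η]
    have hc : volume ((⋃ k : ℤ, herzAnnulus d k)ᶜ) = 0 := by
      have hsub : (⋃ k : ℤ, herzAnnulus d k)ᶜ ⊆ ({0} : Set (Fin d → ℝ)) := by
        intro x hx
        simp only [Set.mem_compl_iff, Set.mem_iUnion, not_exists] at hx
        by_contra h0
        have hx0 : x ≠ 0 := by simpa using h0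
        obtain ⟨k, hk⟩ := exists_annulus (norm_pos_iff.mpr hx0)
        exact hx k hk
      refine measure_mono_null hsub ?_
      refine measure_mono_null (?_ : ({0} : Set (Fin d → ℝ)) ⊆ Metric.closedBall 0 0) ?_
      · simp
      · rw [Real.volume_pi_closedBall 0 le_rfl]
        simp [hd.ne']
    rw [setLIntegral_measure_zero _ _ hc, add_zero]
  -- pointwise bounds for η on each annulus
  have hEtaLe : ∀ k : ℤ, ∀ x ∈ herzAnnulus d k,
      η x ≤ ∑' j : ℤ, (if k ≤ j then S j else 0) := by
    intro k x hx
    refine iSup₂_le fun t ht => ?_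
    have htp : 0 < ‖t‖ := lt_of_lt_of_le (norm_pos_of_mem hx) ht
    obtain ⟨j, hj⟩ := exists_annulus htp
    have hkj : k ≤ j := le_of_annulus hx hj ht
    calc (‖f t‖₊ : ℝ≥0∞) ≤ S j := le_iSup₂ (f := fun y (_ : y ∈ herzAnnulus d j) => (‖f y‖₊ : ℝ≥0∞)) t hj
      _ = (if k ≤ j then S j else 0) := by rw [if_pos hkj]
      _ ≤ _ := ENNReal.le_tsum j
  have hSLe : ∀ k : ℤ, ∀ x ∈ herzAnnulus d k, S (k+1) ≤ η x := by
    intro k x hx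
    refine iSup₂_le fun t ht => ?_
    have h1 : (2:ℝ)^(k+1-1)*π ≤ ‖t‖ := ht.1
    have hxt : ‖x‖ ≤ ‖t‖ := by
      refine le_of_lt (lt_of_lt_of_le hx.2 ?_)
      rwa [show (k+1-1:ℤ) = k by ring] at h1
    exact le_iSup₂ (f := fun y (_ : ‖x‖ ≤ ‖y‖) => (‖f y‖₊ : ℝ≥0∞)) t hxt
  -- geometric sum bound
  have hG : ∀ j : ℤ, (∑' k : ℤ, if k ≤ j then (2:ℝ≥0∞)^((k+1)*(d:ℤ)) else 0)
      ≤ 2 * 2^((j+1)*(d:ℤ)) := by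
    intro j
    have hinj : Function.Injective (fun n : ℕ => j - (n:ℤ)) := by
      intro a b h; simp only at h; omega
    have hsupp : Function.support (fun k : ℤ => if k ≤ j then (2:ℝ≥0∞)^((k+1)*(d:ℤ)) else 0)
        ⊆ Set.range (fun n : ℕ => j - (n:ℤ)) := by
      intro k hk
      simp only [Function.mem_support] at hk
      have hkj : k ≤ j := by by_contra h; simp [h] at hk
      exact ⟨(j - k).toNat, by simp; omega⟩
    rw [← hinj.tsum_eq hsupp]
    have heq : ∀ n : ℕ, (if (j - (n:ℤ)) ≤ j then (2:ℝ≥0∞)^((j-(n:ℤ)+1)*(d:ℤ)) else 0)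
        = 2^((j+1)*(d:ℤ)) * ((2:ℝ≥0∞)^(-(d:ℤ)))^n := by
      intro n
      rw [if_pos (by omega), two_zpow_pow, ← two_zpow_add]
      congr 1; push_cast; ring
    calc (∑' n : ℕ, (fun k : ℤ => if k ≤ j then (2:ℝ≥0∞)^((k+1)*(d:ℤ)) else 0) (j - (n:ℤ)))
        = ∑' n : ℕ, 2^((j+1)*(d:ℤ)) * ((2:ℝ≥0∞)^(-(d:ℤ)))^n := tsum_congr heq
      _ = 2^((j+1)*(d:ℤ)) * ∑' n : ℕ, ((2:ℝ≥0∞)^(-(d:ℤ)))^n := ENNReal.tsum_mul_left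
      _ ≤ 2^((j+1)*(d:ℤ)) * 2 := by
          gcongr
          calc ∑' n : ℕ, ((2:ℝ≥0∞)^(-(d:ℤ)))^n ≤ ∑' n : ℕ, ((2:ℝ≥0∞)⁻¹)^n := by
                gcongr with n
                have h1 : (2:ℝ≥0∞)^(-(d:ℤ)) ≤ 2^(-1:ℤ) :=
                  ENNReal.zpow_le_of_le one_le_two (by omega)
                rwa [zpow_neg_one] at h1
            _ = 2 := by rw [ENNReal.tsum_geometric, ENNReal.one_sub_inv_two, inv_inv]
      _ = 2 * 2^((j+1)*(d:ℤ)) := mul_comm _ _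
  -- upper bound: ∫ η ≤ 2^(d+1) * PP^d * herzNorm
  have hUp : (∫⁻ x, η x) ≤ 2^(d+1) * PP^d * herzNorm d f := by
    rw [hSplit, hHerz]
    have hterm : ∀ j : ℤ, (2 * (2:ℝ≥0∞)^((j+1)*(d:ℤ))) * S j
        = 2^(d+1) * (2^(j*(d:ℤ)) * S j) := by
      intro j
      rw [show ((j+1)*(d:ℤ)) = j*(d:ℤ) + (d:ℤ) by ring, two_zpow_add,
        zpow_natCast, pow_succ]
      ring
    calc ∑' k : ℤ, ∫⁻ x in herzAnnulus d k, η x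
        ≤ ∑' k : ℤ, (2:ℝ≥0∞)^((k+1)*(d:ℤ)) * PP^d * (∑' j : ℤ, if k ≤ j then S j else 0) := by
          refine ENNReal.tsum_le_tsum fun k => ?_
          calc ∫⁻ x in herzAnnulus d k, η x
              ≤ ∫⁻ _ in herzAnnulus d k, (∑' j : ℤ, if k ≤ j then S j else 0) :=
                setLIntegral_mono' (measurableSet_annulus d k) (hEtaLe k)
            _ = (∑' j : ℤ, if k ≤ j then S j else 0) * volume (herzAnnulus d k) :=
                setLIntegral_const _ _
            _ ≤ (∑' j : ℤ, if k ≤ j then S j else 0) * (2^((k+1)*(d:ℤ)) * PP^d) := by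
                gcongr
                exact volume_annulus_le d k
            _ = _ := by ring
      _ = ∑' k : ℤ, PP^d * ∑' j : ℤ, (if k ≤ j then (2:ℝ≥0∞)^((k+1)*(d:ℤ)) * S j else 0) := by
          refine tsum_congr fun k => ?_
          have h1 : (∑' j : ℤ, if k ≤ j then (2:ℝ≥0∞)^((k+1)*(d:ℤ)) * S j else 0)
              = (2:ℝ≥0∞)^((k+1)*(d:ℤ)) * ∑' j : ℤ, (if k ≤ j then S j else 0) := by
            rw [← ENNReal.tsum_mul_left]
            exact tsum_congr fun j => by split_ifs <;> simp
          rw [h1]; ring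
      _ = PP^d * ∑' k : ℤ, ∑' j : ℤ, (if k ≤ j then (2:ℝ≥0∞)^((k+1)*(d:ℤ)) * S j else 0) :=
          ENNReal.tsum_mul_left
      _ = PP^d * ∑' j : ℤ, (∑' k : ℤ, if k ≤ j then (2:ℝ≥0∞)^((k+1)*(d:ℤ)) else 0) * S j := by
          congr 1
          rw [ENNReal.tsum_comm]
          refine tsum_congr fun j => ?_
          rw [← ENNReal.tsum_mul_right]
          exact tsum_congr fun k => by split_ifs <;> simp
      _ ≤ PP^d * ∑' j : ℤ, (2 * (2:ℝ≥0∞)^((j+1)*(d:ℤ))) * S j := by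
          gcongr with j
          exact hG j
      _ = 2^(d+1) * PP^d * ∑' j : ℤ, 2^(j*(d:ℤ)) * S j := by
          rw [tsum_congr hterm, ENNReal.tsum_mul_left, ← mul_assoc, mul_comm (PP^d)]
  -- lower bound: herzNorm ≤ 2^(2*d) * (PP^d)⁻¹ * ∫ η
  have hLow : herzNorm d f ≤ 2^(2*d) * (PP^d)⁻¹ * (∫⁻ x, η x) := by
    rw [hSplit, hHerz]
    have hterm : ∀ k : ℤ, (2:ℝ≥0∞)^(k*(d:ℤ)) * S k
        ≤ 2^(2*d) * (PP^d)⁻¹ * ∫⁻ x in herzAnnulus d (k-1), η x := by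
      intro k
      have h1 : PP^d * (2^((k-2)*(d:ℤ)) * S k) ≤ ∫⁻ x in herzAnnulus d (k-1), η x := by
        calc PP^d * ((2:ℝ≥0∞)^((k-2)*(d:ℤ)) * S k)
            = ((2:ℝ≥0∞)^((k-1-1)*(d:ℤ)) * PP^d) * S k := by
              rw [show (k-1-1:ℤ) = k-2 by ring]; ring
          _ ≤ volume (herzAnnulus d (k-1)) * S k := by
              gcongr
              exact le_volume_annulus hd (k-1)
          _ = S (k-1+1) * volume (herzAnnulus d (k-1)) := by
              rw [show (k-1+1:ℤ) = k by ring]; ring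
          _ = ∫⁻ _ in herzAnnulus d (k-1), S (k-1+1) := (setLIntegral_const _ _).symm
          _ ≤ ∫⁻ x in herzAnnulus d (k-1), η x :=
              setLIntegral_mono' (measurableSet_annulus d (k-1)) (hSLe (k-1))
      have h2 : ((2:ℝ≥0∞)^(2*d) * 2^((k-2)*(d:ℤ))) = 2^(k*(d:ℤ)) := by
        rw [← zpow_natCast (2:ℝ≥0∞) (2*d), ← two_zpow_add]
        congr 1; push_cast; ring
      calc (2:ℝ≥0∞)^(k*(d:ℤ)) * S k
          = 2^(2*d) * (PP^d)⁻¹ * (PP^d * ((2:ℝ≥0∞)^((k-2)*(d:ℤ)) * S k)) := by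
            rw [show (2:ℝ≥0∞)^(2*d) * (PP^d)⁻¹ * (PP^d * ((2:ℝ≥0∞)^((k-2)*(d:ℤ)) * S k))
                = ((2:ℝ≥0∞)^(2*d) * 2^((k-2)*(d:ℤ))) * ((PP^d)⁻¹ * PP^d) * S k by ring,
              ENNReal.inv_mul_cancel hPd0 hPdt, h2, mul_one]
        _ ≤ _ := by gcongr
    calc ∑' k : ℤ, (2:ℝ≥0∞)^(k*(d:ℤ)) * S k
        ≤ ∑' k : ℤ, 2^(2*d) * (PP^d)⁻¹ * ∫⁻ x in herzAnnulus d (k-1), η x :=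
          ENNReal.tsum_le_tsum hterm
      _ = 2^(2*d) * (PP^d)⁻¹ * ∑' k : ℤ, ∫⁻ x in herzAnnulus d (k-1), η x :=
          ENNReal.tsum_mul_left
      _ = 2^(2*d) * (PP^d)⁻¹ * ∑' k : ℤ, ∫⁻ x in herzAnnulus d k, η x := by
          congr 1
          exact (Equiv.subRight (1:ℤ)).tsum_eq fun k => ∫⁻ x in herzAnnulus d k, η x
  -- comparison with C
  have hA : (2:ℝ≥0∞)^(d+1) * PP^d ≤ C := by
    rw [hCdef]
    gcongr
    · norm_num
    · omega
    · exact le_self_add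
  have hB : (2:ℝ≥0∞)^(2*d) * (PP^d)⁻¹ ≤ C := by
    rw [hCdef]
    gcongr
    · norm_num
    · omega
    · exact le_add_self
  have hUp' : (∫⁻ x, η x) ≤ C * herzNorm d f :=
    hUp.trans (mul_le_mul_left hA _)
  have hLow' : herzNorm d f ≤ C * (∫⁻ x, η x) :=
    hLow.trans (mul_le_mul_left hB _)
  refine ⟨⟨fun h => lt_of_le_of_lt hUp' (ENNReal.mul_lt_top hCt.lt_top h),
    fun h => lt_of_le_of_lt hLow' (ENNReal.mul_lt_top hCt.lt_top h)⟩, ?_, hLow'⟩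
  calc C⁻¹ * (∫⁻ x, η x) ≤ C⁻¹ * (C * herzNorm d f) := mul_le_mul_right hUp' _
    _ = (C⁻¹ * C) * herzNorm d f := (mul_assoc _ _ _).symm
    _ = herzNorm d f := by rw [ENNReal.inv_mul_cancel hC0 hCt, one_mul]
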